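/- Let E be a real inner product space, f : E → ℝ convex and differentiable with L-Lipschitz gradient (L > 0), ψ : E → ℝ convex, F = f + ψ with nonempty minimizer set Ω and F* = min F. Let γ ∈ (0,1], C₂ ∈ (0, (2−γ)/L], C₁ ≥ C₂. Suppose the iterates x_{k+1} = x_k + d_k are generated where d_k is the global minimizer over d of ⟨∇f(x_k), d⟩ + (1/(2α_k))‖d‖² + ψ(x_k + d), with α_k ∈ [C₂, C₁] chosen so that F(x_k + d_k) ≤ F(x_k) − (γ/(2α_k))‖d_k‖². Then k·(F(x_k) − F*) → 0 (i.e., F(x_k) − F* = o(1/k)), and the sequence (x_k) is bounded. -/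

import Mathlib

open scoped RealInnerProductSpace
open Filter

section Aux

variable {E : Type*} [NormedAddCommGroup E] [InnerProductSpace ℝ E]

/-- Derivative of `f` along a line. -/
private lemma pgls_line_hasDerivAt (f : E → ℝ) (f' : E → E)
    (hderiv : ∀ y, HasFDerivAt f (innerSL ℝ (f' y)) y) (x v : E) (t : ℝ) :
    HasDerivAt (fun s : ℝ => f (x + s • v)) ⟪f' (x + t • v), v⟫ t := by
  have h1 : HasDerivAt (fun s : ℝ => x + s • v) v t := by
    simpa using ((hasDerivAt_id t).smul_const v).const_add x
  have := (hderiv (x + t • v)).comp_hasDerivAt t h1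
  simpa [Function.comp_def] using this

/-- Gradient inequality for convex functions. -/
private lemma pgls_convex_grad (f : E → ℝ) (f' : E → E)
    (hfconv : ConvexOn ℝ Set.univ f)
    (hderiv : ∀ y, HasFDerivAt f (innerSL ℝ (f' y)) y) (x z : E) :
    f x + ⟪f' x, z - x⟫ ≤ f z := by
  set h : ℝ → ℝ := fun t => f (x + t • (z - x)) with hh
  have hconv : ConvexOn ℝ Set.univ h := by
    have := hfconv.comp_affineMap (AffineMap.lineMap x z : ℝ →ᵃ[ℝ] E)
    have heq : (f ∘ (AffineMap.lineMap x z : ℝ →ᵃ[ℝ] E)) = h := by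
      funext t
      simp [hh, AffineMap.lineMap_apply_module, Function.comp]
      ring_nf
      congr 1
      module
    rw [heq] at this
    simpa using this
  have hd0 : HasDerivAt h ⟪f' x, z - x⟫ 0 := by
    have := pgls_line_hasDerivAt f f' hderiv x (z - x) 0
    simpa using this
  have hslope := hconv.le_slope_of_hasDerivWithinAt_Ioi (Set.mem_univ 0)
    (Set.mem_univ 1) one_pos hd0.hasDerivWithinAt
  have : slope h 0 1 = h 1 - h 0 := by simp [slope_def_field]
  rw [this] at hslope
  have h0 : h 0 = f x := by simp [hh]
  have h1 : h 1 = f z := by simp [hh]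
  rw [h0, h1] at hslope
  linarith

/-- Descent lemma: `f(x+v) ≤ f(x) + ⟨∇f(x),v⟩ + (L/2)‖v‖²`. -/
private lemma pgls_descent (f : E → ℝ) (f' : E → E) (L : ℝ) (hL : 0 < L)
    (hderiv : ∀ y, HasFDerivAt f (innerSL ℝ (f' y)) y)
    (hlip : ∀ y z, ‖f' y - f' z‖ ≤ L * ‖y - z‖) (x v : E) :
    f (x + v) ≤ f x + ⟪f' x, v⟫ + L / 2 * ‖v‖ ^ 2 := by
  set g : ℝ → ℝ := fun t => f (x + t • v) - t * ⟪f' x, v⟫ - L / 2 * t ^ 2 * ‖v‖ ^ 2 with hg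
  have hgd : ∀ t : ℝ, HasDerivAt g
      (⟪f' (x + t • v), v⟫ - ⟪f' x, v⟫ - L * t * ‖v‖ ^ 2) t := by
    intro t
    have h1 := pgls_line_hasDerivAt f f' hderiv x v t
    have h2 : HasDerivAt (fun s : ℝ => s * ⟪f' x, v⟫) ⟪f' x, v⟫ t := by
      simpa using (hasDerivAt_id t).mul_const ⟪f' x, v⟫
    have h3 : HasDerivAt (fun s : ℝ => L / 2 * s ^ 2 * ‖v‖ ^ 2)
        (L * t * ‖v‖ ^ 2) t := by
      have : HasDerivAt (fun s : ℝ => s ^ 2) (2 * t) t := by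
        simpa using hasDerivAt_pow 2 t
      have := (this.const_mul (L / 2)).mul_const (‖v‖ ^ 2)
      rw [show L * t * ‖v‖ ^ 2 = L / 2 * (2 * t) * ‖v‖ ^ 2 by ring]
      exact this
    have := (h1.sub h2).sub h3
    exact this
  have hanti : AntitoneOn g (Set.Icc (0:ℝ) 1) := by
    apply antitoneOn_of_deriv_nonpos (convex_Icc 0 1)
    · exact fun t _ => ((hgd t).differentiableAt).continuousAt.continuousWithinAt
    · intro t ht
      exact ((hgd t).differentiableAt).differentiableWithinAt
    · intro t ht
      rw [interior_Icc] at ht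
      rw [(hgd t).deriv]
      have hb : ⟪f' (x + t • v) - f' x, v⟫ ≤ L * t * ‖v‖ ^ 2 := by
        calc ⟪f' (x + t • v) - f' x, v⟫ ≤ ‖f' (x + t • v) - f' x‖ * ‖v‖ :=
              real_inner_le_norm _ _
          _ ≤ L * ‖(x + t • v) - x‖ * ‖v‖ := by
              have := hlip (x + t • v) x
              exact mul_le_mul_of_nonneg_right this (norm_nonneg v)
          _ = L * t * ‖v‖ ^ 2 := by
              rw [add_sub_cancel_left, norm_smul]
              simp [abs_of_pos ht.1]
              ring
      rw [inner_sub_left] at hb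
      linarith
  have := hanti (Set.left_mem_Icc.2 zero_le_one) (Set.right_mem_Icc.2 zero_le_one)
    zero_le_one
  simp only [hg] at this
  norm_num at this
  linarith

/-- Norm-squared convexity identity. -/
private lemma pgls_norm_combo (a b : E) (t : ℝ) :
    ‖a + t • (b - a)‖ ^ 2
      = (1 - t) * ‖a‖ ^ 2 + t * ‖b‖ ^ 2 - t * (1 - t) * ‖a - b‖ ^ 2 := by
  simp only [← real_inner_self_eq_norm_sq, inner_add_left, inner_add_right,
    inner_sub_left, inner_sub_right, real_inner_smul_left, real_inner_smul_right,
    real_inner_comm a b]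
  ring

/-- Strong convexity refinement of the prox minimization. -/
private lemma pgls_strong_min (ψ : E → ℝ) (hψconv : ConvexOn ℝ Set.univ ψ)
    (g X D : E) (A : ℝ) (hA : 0 < A)
    (hd : ∀ z : E, ⟪g, D⟫ + 1 / (2 * A) * ‖D‖ ^ 2 + ψ (X + D) ≤
        ⟪g, z⟫ + 1 / (2 * A) * ‖z‖ ^ 2 + ψ (X + z))
    (z : E) :
    ⟪g, D⟫ + 1 / (2 * A) * ‖D‖ ^ 2 + ψ (X + D) + 1 / (2 * A) * ‖D - z‖ ^ 2 ≤
      ⟪g, z⟫ + 1 / (2 * A) * ‖z‖ ^ 2 + ψ (X + z) := by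
  set φD := ⟪g, D⟫ + 1 / (2 * A) * ‖D‖ ^ 2 + ψ (X + D) with hφD
  clear_value φD
  set φz := ⟪g, z⟫ + 1 / (2 * A) * ‖z‖ ^ 2 + ψ (X + z) with hφz
  clear_value φz
  have hB : (0:ℝ) ≤ ‖D - z‖ ^ 2 := sq_nonneg _
  have key : ∀ t : ℝ, t ∈ Set.Ioo (0:ℝ) 1 →
      φD + (1 - t) / (2 * A) * ‖D - z‖ ^ 2 ≤ φz := by
    intro t ht
    have h1 := hd (D + t • (z - D))
    have hinner : ⟪g, D + t • (z - D)⟫ = ⟪g, D⟫ + t * (⟪g, z⟫ - ⟪g, D⟫) := by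
      rw [inner_add_right, real_inner_smul_right, inner_sub_right]
    have hnorm : ‖D + t • (z - D)‖ ^ 2
        = (1 - t) * ‖D‖ ^ 2 + t * ‖z‖ ^ 2 - t * (1 - t) * ‖D - z‖ ^ 2 :=
      pgls_norm_combo D z t
    have hpt : X + (D + t • (z - D)) = (1 - t) • (X + D) + t • (X + z) := by
      module
    have hψ : ψ (X + (D + t • (z - D))) ≤ (1 - t) * ψ (X + D) + t * ψ (X + z) := by
      rw [hpt]
      exact hψconv.2 (Set.mem_univ _) (Set.mem_univ _) (by linarith [ht.2])
        (le_of_lt ht.1) (by ring)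
    rw [hinner, hnorm] at h1
    have hAinv : (0:ℝ) < 1 / (2 * A) := by positivity
    have hcomb : φD ≤ (1 - t) * φD + t * φz
        - 1 / (2 * A) * (t * (1 - t)) * ‖D - z‖ ^ 2 := by
      have h2 : φD ≤ ⟪g, D⟫ + t * (⟪g, z⟫ - ⟪g, D⟫)
          + 1 / (2 * A) * ((1 - t) * ‖D‖ ^ 2 + t * ‖z‖ ^ 2
            - t * (1 - t) * ‖D - z‖ ^ 2)
          + ((1 - t) * ψ (X + D) + t * ψ (X + z)) := by linarith
      calc φD ≤ _ := h2
        _ = (1 - t) * φD + t * φz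
            - 1 / (2 * A) * (t * (1 - t)) * ‖D - z‖ ^ 2 := by
          rw [hφD, hφz]; ring
    have h5 : t * (1 / (2 * A) * ((1 - t) * ‖D - z‖ ^ 2)) ≤ t * (φz - φD) := by
      nlinarith [hcomb]
    have h6 := (mul_le_mul_iff_right₀ ht.1).mp h5
    have h7 : (1 - t) / (2 * A) * ‖D - z‖ ^ 2
        = 1 / (2 * A) * ((1 - t) * ‖D - z‖ ^ 2) := by ring
    rw [h7]
    linarith [h6]
  have hseq : Tendsto (fun n : ℕ => (1 / ((n:ℝ) + 1) / 2) / (2 * A) * ‖D - z‖ ^ 2)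
      atTop (nhds 0) := by
    have := ((tendsto_one_div_add_atTop_nhds_zero_nat.div_const 2).div_const
      (2 * A)).mul_const (‖D - z‖ ^ 2)
    simpa using this
  have hle : ∀ n : ℕ, φD + 1 / (2 * A) * ‖D - z‖ ^ 2 - φz ≤
      (1 / ((n:ℝ) + 1) / 2) / (2 * A) * ‖D - z‖ ^ 2 := by
    intro n
    have hn1 : (0:ℝ) < 1 / ((n:ℝ) + 1) / 2 := by positivity
    have hn2 : 1 / ((n:ℝ) + 1) / 2 < 1 := by
      have h1 : 1 / ((n:ℝ) + 1) ≤ 1 := by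
        rw [div_le_one (by positivity)]; linarith [Nat.cast_nonneg (α := ℝ) n]
      linarith
    have := key (1 / ((n:ℝ) + 1) / 2) ⟨hn1, hn2⟩
    have hexp : (1 - 1 / ((n:ℝ) + 1) / 2) / (2 * A) * ‖D - z‖ ^ 2
        = 1 / (2 * A) * ‖D - z‖ ^ 2 - (1 / ((n:ℝ) + 1) / 2) / (2 * A) * ‖D - z‖ ^ 2 := by
      ring
    rw [hexp] at this
    linarith
  have := ge_of_tendsto' hseq hle
  linarith

end Aux

/-- Summable antitone nonnegative sequences satisfy `n * a n → 0`. -/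
private lemma pgls_tendsto_nat_mul {a : ℕ → ℝ} (hpos : ∀ n, 0 ≤ a n)
    (hmono : Antitone a) (hsum : Summable a) :
    Tendsto (fun n : ℕ => (n : ℝ) * a n) atTop (nhds 0) := by
  rw [Metric.tendsto_atTop]
  intro ε hε
  have hcauchy : CauchySeq (fun n => ∑ k ∈ Finset.range n, a k) :=
    hsum.hasSum.tendsto_sum_nat.cauchySeq
  obtain ⟨N, hN⟩ := Metric.cauchySeq_iff'.1 hcauchy (ε / 2) (by linarith)
  have ha0 : Tendsto a atTop (nhds 0) := hsum.tendsto_atTop_zero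
  obtain ⟨M, hM⟩ := (Metric.tendsto_atTop.1 ha0) (ε / (2 * (N + 1))) (by positivity)
  refine ⟨max N M, fun n hn => ?_⟩
  have hnN : N ≤ n := le_trans (le_max_left _ _) hn
  have hnM : M ≤ n := le_trans (le_max_right _ _) hn
  have han : 0 ≤ a n := hpos n
  have hdist := hN n hnN
  have hsum_bound : ((n : ℝ) - N) * a n ≤ ε / 2 := by
    have hcard : ((n - N : ℕ) : ℝ) * a n ≤ ∑ k ∈ Finset.Ico N n, a k := by
      have := Finset.card_nsmul_le_sum (Finset.Ico N n) a (a n)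
        (fun k hk => hmono (le_of_lt (Finset.mem_Ico.1 hk).2))
      simpa [Nat.card_Ico, nsmul_eq_mul] using this
    have hIco : ∑ k ∈ Finset.Ico N n, a k
        = (∑ k ∈ Finset.range n, a k) - ∑ k ∈ Finset.range N, a k := by
      rw [Finset.sum_Ico_eq_sub _ hnN]
    have habs : (∑ k ∈ Finset.range n, a k) - ∑ k ∈ Finset.range N, a k < ε / 2 := by
      have := hdist
      rw [Real.dist_eq] at this
      have := abs_lt.1 this
      linarith [this.1, this.2]
    rw [Nat.cast_sub hnN] at hcard
    linarith [hcard, hIco ▸ hcard]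
  have hNa : (N : ℝ) * a n < ε / 2 := by
    have := hM n hnM
    rw [Real.dist_eq, sub_zero, abs_of_nonneg han] at this
    calc (N : ℝ) * a n ≤ (N + 1) * a n := by nlinarith [Nat.cast_nonneg (α := ℝ) N]
      _ < (N + 1) * (ε / (2 * (N + 1))) := by
          apply mul_lt_mul_of_pos_left this (by positivity)
      _ = ε / 2 := by field_simp
  rw [Real.dist_eq, sub_zero, abs_of_nonneg (mul_nonneg (Nat.cast_nonneg n) han)]
  have : (n : ℝ) * a n = ((n : ℝ) - N) * a n + N * a n := by ring
  rw [this]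
  linarith

/-- **Theorem 5 of the paper.** Proximal gradient with line search
(steps `α_k ∈ [C₂, C₁]`, `C₂ ∈ (0, (2−γ)/L]`, sufficient decrease
`F(x_k + d_k) ≤ F(x_k) − (γ/(2α_k))‖d_k‖²`) satisfies `F(x_k) − F* = o(1/k)`, and
the iterate sequence is bounded. -/
theorem proximal_gradient_line_search_o_one_div_k
    {E : Type*} [NormedAddCommGroup E] [InnerProductSpace ℝ E]
    (f : E → ℝ) (f' : E → E) (ψ : E → ℝ) (L : ℝ) (hL : 0 < L)
    (hfconv : ConvexOn ℝ Set.univ f)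
    (hderiv : ∀ y, HasFDerivAt f (innerSL ℝ (f' y)) y)
    (hlip : ∀ y z, ‖f' y - f' z‖ ≤ L * ‖y - z‖)
    (hψconv : ConvexOn ℝ Set.univ ψ)
    (F : E → ℝ) (hF : ∀ y, F y = f y + ψ y)
    (xstar : E) (hxstar : ∀ y, F xstar ≤ F y)
    (γ C₁ C₂ : ℝ) (hγ0 : 0 < γ) (hγ1 : γ ≤ 1)
    (hC₂0 : 0 < C₂) (hC₂L : C₂ ≤ (2 - γ) / L) (hC₁ : C₂ ≤ C₁)
    (α : ℕ → ℝ) (hα : ∀ k, α k ∈ Set.Icc C₂ C₁)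
    (x : ℕ → E) (d : ℕ → E)
    (hd : ∀ k, ∀ z : E,
      ⟪f' (x k), d k⟫ + 1 / (2 * α k) * ‖d k‖ ^ 2 + ψ (x k + d k) ≤
        ⟪f' (x k), z⟫ + 1 / (2 * α k) * ‖z‖ ^ 2 + ψ (x k + z))
    (hdec : ∀ k, F (x k + d k) ≤ F (x k) - γ / (2 * α k) * ‖d k‖ ^ 2)
    (hx : ∀ k, x (k + 1) = x k + d k) :
    Filter.Tendsto (fun k : ℕ => (k : ℝ) * (F (x k) - F xstar))
        Filter.atTop (nhds 0) ∧
      Bornology.IsBounded (Set.range x) := by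
  have hα0 : ∀ k, 0 < α k := fun k => lt_of_lt_of_le hC₂0 (hα k).1
  have hC₁0 : 0 < C₁ := lt_of_lt_of_le hC₂0 hC₁
  -- Δ notation
  set Δ : ℕ → ℝ := fun k => F (x k) - F xstar with hΔ
  clear_value Δ
  have hΔ0 : ∀ k, 0 ≤ Δ k := by
    intro k
    simp only [hΔ]
    exact sub_nonneg.2 (hxstar (x k))
  -- sufficient decrease rewritten
  have hdec' : ∀ k, Δ (k + 1) ≤ Δ k - γ / (2 * α k) * ‖d k‖ ^ 2 := by
    intro k
    have := hdec k
    rw [← hx k] at this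
    simp only [hΔ]
    linarith
  have hΔmono : ∀ k, Δ (k + 1) ≤ Δ k := by
    intro k
    have h := hdec' k
    have hαk := hα0 k
    have : 0 ≤ γ / (2 * α k) * ‖d k‖ ^ 2 := by positivity
    linarith
  have hdnorm : ∀ k, ‖d k‖ ^ 2 ≤ 2 * α k / γ * (Δ k - Δ (k + 1)) := by
    intro k
    have h := hdec' k
    have hαk := hα0 k
    have h2 : γ / (2 * α k) * ‖d k‖ ^ 2 ≤ Δ k - Δ (k + 1) := by linarith
    have hone : 2 * α k / γ * (γ / (2 * α k)) = 1 := by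
      field_simp
    calc ‖d k‖ ^ 2 = 2 * α k / γ * (γ / (2 * α k)) * ‖d k‖ ^ 2 := by
          rw [hone]; ring
      _ = 2 * α k / γ * (γ / (2 * α k) * ‖d k‖ ^ 2) := by ring
      _ ≤ 2 * α k / γ * (Δ k - Δ (k + 1)) :=
          mul_le_mul_of_nonneg_left h2 (by positivity)
  -- key per-step inequality
  have hstar : ∀ k, Δ (k + 1) ≤
      1 / (2 * α k) * (‖x k - xstar‖ ^ 2 - ‖x (k + 1) - xstar‖ ^ 2)
        + (L / 2 - 1 / (2 * α k)) * ‖d k‖ ^ 2 := by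
    intro k
    have hB := pgls_strong_min ψ hψconv (f' (x k)) (x k) (d k) (α k) (hα0 k)
      (hd k) (xstar - x k)
    have hDesc := pgls_descent f f' L hL hderiv hlip (x k) (d k)
    have hConv := pgls_convex_grad f f' hfconv hderiv (x k) xstar
    have e1 : x k + (xstar - x k) = xstar := by abel
    have e2 : ‖d k - (xstar - x k)‖ ^ 2 = ‖x k + d k - xstar‖ ^ 2 := by
      rw [show d k - (xstar - x k) = x k + d k - xstar by abel]
    have e3 : ‖xstar - x k‖ ^ 2 = ‖x k - xstar‖ ^ 2 := by
      rw [norm_sub_rev]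
    rw [e1, e2, e3] at hB
    have hF1 := hF (x k + d k)
    have hF2 := hF xstar
    simp only [hΔ]
    rw [hx k]
    linarith [hB, hDesc, hConv]
  -- Lyapunov function
  set c : ℝ := 2 * L * C₁ ^ 2 / γ with hc
  clear_value c
  have hc0 : 0 ≤ c := by rw [hc]; positivity
  set V : ℕ → ℝ := fun k => ‖x k - xstar‖ ^ 2 + c * Δ k with hV
  clear_value V
  have hV0 : ∀ k, 0 ≤ V k := by
    intro k
    simp only [hV]
    exact add_nonneg (sq_nonneg _) (mul_nonneg hc0 (hΔ0 k))
  have hstep : ∀ k, 2 * C₂ * Δ (k + 1) ≤ V k - V (k + 1) := by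
    intro k
    have h1 := hstar k
    -- multiply by 2 α k
    have h2 : 2 * α k * Δ (k + 1) ≤
        (‖x k - xstar‖ ^ 2 - ‖x (k + 1) - xstar‖ ^ 2) + (L * α k - 1) * ‖d k‖ ^ 2 := by
      have hαpos := hα0 k
      have := mul_le_mul_of_nonneg_left h1 (le_of_lt (mul_pos two_pos hαpos))
      calc 2 * α k * Δ (k + 1) ≤ 2 * α k *
            (1 / (2 * α k) * (‖x k - xstar‖ ^ 2 - ‖x (k + 1) - xstar‖ ^ 2)
              + (L / 2 - 1 / (2 * α k)) * ‖d k‖ ^ 2) := this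
        _ = (‖x k - xstar‖ ^ 2 - ‖x (k + 1) - xstar‖ ^ 2)
              + (L * α k - 1) * ‖d k‖ ^ 2 := by
            field_simp
    have h3 : (L * α k - 1) * ‖d k‖ ^ 2 ≤ c * (Δ k - Δ (k + 1)) := by
      rcases le_or_gt (L * α k - 1) 0 with hcase | hcase
      · have hle : (L * α k - 1) * ‖d k‖ ^ 2 ≤ 0 :=
          mul_nonpos_of_nonpos_of_nonneg hcase (sq_nonneg _)
        have : 0 ≤ c * (Δ k - Δ (k + 1)) :=
          mul_nonneg hc0 (sub_nonneg.2 (hΔmono k))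
        linarith
      · have hα1 : α k ≤ C₁ := (hα k).2
        have hLa : L * α k - 1 ≤ L * C₁ := by nlinarith
        have hdk := hdnorm k
        have hΔd : 0 ≤ Δ k - Δ (k + 1) := sub_nonneg.2 (hΔmono k)
        have hd2 : ‖d k‖ ^ 2 ≤ 2 * C₁ / γ * (Δ k - Δ (k + 1)) := by
          refine (hdnorm k).trans ?_
          have hfrac : 2 * α k / γ ≤ 2 * C₁ / γ := by
            gcongr
          exact mul_le_mul_of_nonneg_right hfrac hΔd
        calc (L * α k - 1) * ‖d k‖ ^ 2 ≤ (L * C₁) * ‖d k‖ ^ 2 := by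
              nlinarith [sq_nonneg (‖d k‖)]
          _ ≤ (L * C₁) * (2 * C₁ / γ * (Δ k - Δ (k + 1))) := by
              apply mul_le_mul_of_nonneg_left hd2 (by positivity)
          _ = c * (Δ k - Δ (k + 1)) := by rw [hc]; ring
    have h4 : 2 * C₂ * Δ (k + 1) ≤ 2 * α k * Δ (k + 1) := by
      have := (hα k).1
      nlinarith [hΔ0 (k + 1)]
    simp only [hV]
    linarith
  -- V is bounded by V 0
  have hVmono : ∀ k, V (k + 1) ≤ V k := by
    intro k
    have hΔk := hΔ0 (k + 1)
    have : 0 ≤ 2 * C₂ * Δ (k + 1) := by positivity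
    linarith [hstep k]
  have hVle : ∀ k, V k ≤ V 0 := by
    intro k
    induction k with
    | zero => exact le_refl _
    | succ n ih => exact le_trans (hVmono n) ih
  -- boundedness
  have hbdd : Bornology.IsBounded (Set.range x) := by
    apply Bornology.IsBounded.subset (Metric.isBounded_closedBall
      (x := xstar) (r := Real.sqrt (V 0)))
    rintro _ ⟨k, rfl⟩
    rw [Metric.mem_closedBall, dist_eq_norm]
    have h1 : ‖x k - xstar‖ ^ 2 ≤ V 0 := by
      have h3 := hVle k
      have h2 : 0 ≤ c * Δ k := mul_nonneg hc0 (hΔ0 k)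
      have h4 : ‖x k - xstar‖ ^ 2 + c * Δ k = V k := by simp [hV]
      linarith
    calc ‖x k - xstar‖ = Real.sqrt (‖x k - xstar‖ ^ 2) := by
          rw [Real.sqrt_sq (norm_nonneg _)]
      _ ≤ Real.sqrt (V 0) := Real.sqrt_le_sqrt h1
  -- summability of Δ
  have hsum : Summable (fun k => Δ (k + 1)) := by
    apply summable_of_sum_range_le (c := V 0 / (2 * C₂)) (fun n => hΔ0 (n + 1))
    intro n
    have htel : ∑ k ∈ Finset.range n, (2 * C₂ * Δ (k + 1)) ≤ V 0 - V n := by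
      induction n with
      | zero => simp
      | succ m ih =>
        rw [Finset.sum_range_succ]
        have := hstep m
        linarith
    have hsum2 : 2 * C₂ * ∑ k ∈ Finset.range n, Δ (k + 1) ≤ V 0 := by
      rw [Finset.mul_sum] at *
      linarith [hV0 n]
    rw [le_div_iff₀ (by positivity)]
    linarith
  have hsumΔ : Summable Δ := by
    rw [← summable_nat_add_iff 1]
    exact hsum
  have hanti : Antitone Δ := antitone_nat_of_succ_le hΔmono
  refine ⟨?_, hbdd⟩
  have hmain := pgls_tendsto_nat_mul hΔ0 hanti hsumΔ
  simpa [hΔ] using hmain
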